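/- For all X in a commutative ring, X⁹ + X³·(3X²+4)² = X³·(X²+1)·(X²+4)². Consequently, if (X, Y) is a point on the genus 2 curve Y² = (3X²+4)(X³+X) with 3X² + 4 ≠ 0, then (U, V) = (X³/(3X²+4), Y·X·(X²+4)/(3X²+4)²) satisfies V² = U³ + U. -/

import Mathlib

theorem stmt_9 {R : Type*} [CommRing R] {k : Type*} [Field k] :
    (∀ X : R, X ^ 9 + X ^ 3 * (3 * X ^ 2 + 4) ^ 2
        = X ^ 3 * (X ^ 2 + 1) * (X ^ 2 + 4) ^ 2) ∧
    (∀ X Y : k, 3 * X ^ 2 + 4 ≠ 0 →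
      Y ^ 2 = (3 * X ^ 2 + 4) * (X ^ 3 + X) →
      (Y * X * (X ^ 2 + 4) / (3 * X ^ 2 + 4) ^ 2) ^ 2
        = (X ^ 3 / (3 * X ^ 2 + 4)) ^ 3 + X ^ 3 / (3 * X ^ 2 + 4)) := by
  constructor
  · intro X; ring
  · intro X Y h hY
    field_simp
    rw [hY, div_eq_div_iff (pow_ne_zero _ (by rwa [mul_comm] at h)) (pow_ne_zero _ (by rwa [mul_comm] at h))]
    ring
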